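/- Let B be a nilpotent square matrix over ℝ and let P(z) = a_k z^k + a_{k+1} z^{k+1} + ... + a_m z^m be a polynomial with a_k ≠ 0 (so the lowest-order term has degree k). Then rank P(B) = rank B^k. -/

import Mathlib

lemma commute_aeval' {n : ℕ} (B : Matrix (Fin n) (Fin n) ℝ) (q : Polynomial ℝ) :
    Commute B (Polynomial.aeval B q) := by
  rw [Polynomial.aeval_eq_sum_range]
  exact Commute.sum_right _ _ _ fun i _ => ((Commute.refl B).pow_right i).smul_right _

theorem stmt_2 (n : ℕ) (B : Matrix (Fin n) (Fin n) ℝ) (hB : IsNilpotent B)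
    (P : Polynomial ℝ) (k : ℕ) (hk : P.coeff k ≠ 0) (hlow : ∀ i < k, P.coeff i = 0) :
    (Polynomial.aeval B P).rank = (B ^ k).rank := by
  obtain ⟨Q, hQ⟩ := (Polynomial.X_pow_dvd_iff).mpr hlow
  have hQ0 : Q.coeff 0 = P.coeff k := by
    rw [hQ]; simpa using (Polynomial.coeff_X_pow_mul Q k 0).symm
  have hQsplit : Q = Polynomial.C (Q.coeff 0) + Polynomial.X * Q.divX := by
    rw [add_comm]; exact (Polynomial.X_mul_divX_add Q).symm
  have heval : Polynomial.aeval B P = B ^ k * Polynomial.aeval B Q := by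
    rw [hQ, map_mul, map_pow, Polynomial.aeval_X]
  have hnil : IsNilpotent (B * Polynomial.aeval B Q.divX) :=
    Commute.isNilpotent_mul_right (commute_aeval' B Q.divX) hB
  have hunit : IsUnit (Polynomial.aeval B Q) := by
    rw [hQsplit, map_add, map_mul, Polynomial.aeval_X, Polynomial.aeval_C]
    apply IsNilpotent.isUnit_add_left_of_commute hnil
    · rw [hQ0]
      exact (hk.isUnit).map (algebraMap ℝ (Matrix (Fin n) (Fin n) ℝ))
    · exact (Algebra.commutes _ _).symm
  rw [heval]
  exact Matrix.rank_mul_eq_left_of_isUnit_det _ _ (hunit.map Matrix.detMonoidHom)
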